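/- arXiv:1902.00935 — 4 statements merged into one kernel-verified Lean document; each statement's English description precedes it below -/
import Mathlib

section
/- Let 1 ≤ k ≤ n and m ≥ 0 be integers, and let α_1, …, α_m ∈ (ℤ/2)^k be sign patterns. Let f : V_{n,k} → ℝ^m be a continuous map that is equivariant in the sense that for every (x_1, …, x_k) ∈ V_{n,k}, every j ∈ {1, …, k}, and every i ∈ {1, …, m}, replacing x_j by -x_j multiplies the i-th coordinate f_i(x_1, …, x_k) by (-1)^{⟨α_i, ε_j⟩}. Then there exists a continuous map F : (S^{n-1})^k → ℝ^m with the same equivariance property (with respect to the componentwise antipodal actions on (S^{n-1})^k) such that F restricted to V_{n,k} equals f, and such that F(x_1, …, x_k) = 0 whenever some x_j lies in the linear span of x_1, …, x_{j-1}. -/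
/-- The Stiefel manifold predicate: `x` is a `k`-tuple of pairwise orthogonal
unit vectors in `ℝⁿ`. -/
def IsStiefelFrame (n k : ℕ) (x : Fin k → EuclideanSpace ℝ (Fin n)) : Prop :=
  (∀ j, ‖x j‖ = 1) ∧ ∀ i j, i ≠ j → inner ℝ (x i) (x j) = (0 : ℝ)

/-- Negating the `j`-th vector of the tuple `x`. -/
def negAt {n k : ℕ} (j : Fin k) (x : Fin k → EuclideanSpace ℝ (Fin n)) :
    Fin k → EuclideanSpace ℝ (Fin n) :=
  Function.update x j (-(x j))


noncomputable def gramDet (n k : ℕ) (x : Fin k → EuclideanSpace ℝ (Fin n)) : ℝ :=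
  Matrix.det (Matrix.of fun i l : Fin k => (inner ℝ (x i) (x l) : ℝ))

noncomputable def flipSign {n k : ℕ} (S : Finset (Fin k)) (x : Fin k → EuclideanSpace ℝ (Fin n)) :
    Fin k → EuclideanSpace ℝ (Fin n) :=
  fun j => (if j ∈ S then (-1:ℝ) else 1) • x j

/-- toggle membership of j -/
noncomputable def tog {k : ℕ} (j : Fin k) (S : Finset (Fin k)) : Finset (Fin k) :=
  if j ∈ S then S.erase j else insert j S

noncomputable def sgn {m k : ℕ} (α : Fin m → Fin k → ZMod 2) (i : Fin m)
    (S : Finset (Fin k)) : ℝ := ∏ j ∈ S, (-1:ℝ)^(α i j).val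

section lemmas
variable {n k m : ℕ}

lemma negAt_eq_flipSign (j : Fin k) (x : Fin k → EuclideanSpace ℝ (Fin n)) :
    negAt j x = flipSign {j} x := by
  funext l
  by_cases h : l = j <;> simp [negAt, flipSign, Function.update, h]

lemma flipSign_norm (S : Finset (Fin k)) (x : Fin k → EuclideanSpace ℝ (Fin n)) (j : Fin k) :
    ‖flipSign S x j‖ = ‖x j‖ := by
  unfold flipSign
  by_cases h : j ∈ S <;> simp [h]

lemma flipSign_inner (S : Finset (Fin k)) (x : Fin k → EuclideanSpace ℝ (Fin n)) (i j : Fin k) :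
    (inner ℝ (flipSign S x i) (flipSign S x j) : ℝ) =
      ((if i ∈ S then (-1:ℝ) else 1) * (if j ∈ S then (-1:ℝ) else 1)) *
        (inner ℝ (x i) (x j) : ℝ) := by
  unfold flipSign
  rw [real_inner_smul_left, real_inner_smul_right]
  ring

lemma flipSign_stiefel (S : Finset (Fin k)) {x : Fin k → EuclideanSpace ℝ (Fin n)}
    (hx : IsStiefelFrame n k x) : IsStiefelFrame n k (flipSign S x) := by
  refine ⟨fun j => by rw [flipSign_norm]; exact hx.1 j, fun i j hij => ?_⟩
  rw [flipSign_inner, hx.2 i j hij, mul_zero]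

lemma flipSign_empty (x : Fin k → EuclideanSpace ℝ (Fin n)) : flipSign ∅ x = x := by
  funext j; simp [flipSign]

lemma flipSign_insert {S : Finset (Fin k)} {j : Fin k} (hj : j ∉ S)
    (x : Fin k → EuclideanSpace ℝ (Fin n)) :
    flipSign (insert j S) x = negAt j (flipSign S x) := by
  funext l
  by_cases h : l = j
  · subst h
    simp [flipSign, negAt, Function.update, hj]
  · simp [flipSign, negAt, Function.update, h]

lemma flipSign_negAt (S : Finset (Fin k)) (j : Fin k)
    (x : Fin k → EuclideanSpace ℝ (Fin n)) :
    flipSign S (negAt j x) = flipSign (tog j S) x := by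
  funext l
  by_cases h : l = j
  · subst h
    by_cases hS : l ∈ S <;>
      simp [flipSign, negAt, Function.update, tog, hS]
  · have h1 : l ∈ tog j S ↔ l ∈ S := by
      unfold tog
      by_cases hS : j ∈ S <;> simp [hS, h]
    by_cases hS : l ∈ S <;>
      simp [flipSign, negAt, Function.update, h, h1, hS]

lemma tog_involutive (j : Fin k) : Function.Involutive (tog j) := by
  intro S
  unfold tog
  by_cases h : j ∈ S
  · simp [h, Finset.insert_erase h]
  · simp [h, Finset.erase_insert h]

lemma sgn_symmdiff (α : Fin m → Fin k → ZMod 2) (i : Fin m) (j : Fin k)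
    (S : Finset (Fin k)) :
    sgn α i (tog j S) = (-1:ℝ)^(α i j).val * sgn α i S := by
  have hsq : ((-1:ℝ)^(α i j).val) * ((-1:ℝ)^(α i j).val) = 1 := by
    rw [← pow_add]
    exact Even.neg_one_pow ⟨(α i j).val, rfl⟩
  unfold tog sgn
  by_cases h : j ∈ S
  · rw [if_pos h, ← Finset.mul_prod_erase _ _ h, ← mul_assoc, hsq, one_mul]
  · rw [if_neg h, Finset.prod_insert h]

end lemmas

variable {n k : ℕ}

lemma gramDet_stiefel {x : Fin k → EuclideanSpace ℝ (Fin n)}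
    (hx : IsStiefelFrame n k x) : gramDet n k x = 1 := by
  unfold gramDet
  have h : (Matrix.of fun i l : Fin k => (inner ℝ (x i) (x l) : ℝ)) = 1 := by
    ext i l
    by_cases h : i = l
    · subst h
      rw [Matrix.of_apply, Matrix.one_apply_eq, real_inner_self_eq_norm_mul_norm, hx.1 i,
        one_mul]
    · rw [Matrix.of_apply, Matrix.one_apply_ne h, hx.2 i l h]
  rw [h, Matrix.det_one]

lemma gramDet_negAt (j : Fin k) (x : Fin k → EuclideanSpace ℝ (Fin n)) :
    gramDet n k (negAt j x) = gramDet n k x := by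
  classical
  set d : Fin k → ℝ := fun l => if l = j then -1 else 1 with hd
  have hneg : ∀ l, negAt j x l = d l • x l := by
    intro l; by_cases h : l = j <;> simp [negAt, Function.update, h, hd]
  set M : Matrix (Fin k) (Fin k) ℝ := Matrix.of fun i l => (inner ℝ (x i) (x l) : ℝ) with hM
  have hMat : (Matrix.of fun i l : Fin k => (inner ℝ (negAt j x i) (negAt j x l) : ℝ)) =
      Matrix.diagonal d * M * Matrix.diagonal d := by
    ext i l
    rw [Matrix.mul_diagonal, Matrix.diagonal_mul]
    simp only [Matrix.of_apply, hneg, real_inner_smul_left, real_inner_smul_right, hM]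
    ring
  unfold gramDet
  rw [hMat, Matrix.det_mul, Matrix.det_mul, Matrix.det_diagonal]
  have h1 : (∏ l, d l) * ∏ l, d l = 1 := by
    rw [← Finset.prod_mul_distrib]
    apply Finset.prod_eq_one
    intro l _
    by_cases h : l = j <;> simp [hd, h]
  calc (∏ l, d l) * M.det * ∏ l, d l = ((∏ l, d l) * ∏ l, d l) * M.det := by ring
    _ = M.det := by rw [h1, one_mul]

lemma gramDet_dep {x : Fin k → EuclideanSpace ℝ (Fin n)} {j : Fin k}
    (hmem : x j ∈ Submodule.span ℝ (x '' {i | i < j})) : gramDet n k x = 0 := by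
  classical
  rw [Finsupp.mem_span_image_iff_linearCombination] at hmem
  obtain ⟨l, hl, hxl⟩ := hmem
  set w : Fin k → ℝ := fun i => l i - if i = j then 1 else 0 with hw
  have hlj : l j = 0 := by
    by_contra h
    have hj := (Finsupp.mem_supported ℝ l).mp hl (Finsupp.mem_support_iff.mpr h)
    simp only [Set.mem_setOf_eq] at hj
    exact lt_irrefl j hj
  have hsum : ∑ i, w i • x i = (0 : EuclideanSpace ℝ (Fin n)) := by
    have hlin : Finsupp.linearCombination ℝ x l = ∑ i, l i • x i := by
      rw [Finsupp.linearCombination_apply, Finsupp.sum_fintype]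
      intro i; exact zero_smul ℝ (x i)
    have h2 : ∑ i, w i • x i =
        (∑ i, l i • x i) - ∑ i, (if i = j then (1:ℝ) else 0) • x i := by
      rw [← Finset.sum_sub_distrib]
      congr 1; funext i; rw [hw, sub_smul]
    rw [h2, ← hlin, hxl]
    simp [ite_smul]
  have hw0 : w ≠ 0 := by
    intro h
    have := congrFun h j
    simp [hw, hlj] at this
  have hmv : Matrix.mulVec (Matrix.of fun i l' : Fin k => (inner ℝ (x i) (x l') : ℝ)) w = 0 := by
    funext i
    simp only [Matrix.mulVec, dotProduct, Matrix.of_apply, Pi.zero_apply]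
    have h3 : ∑ l', (inner ℝ (x i) (x l') : ℝ) * w l' =
        (inner ℝ (x i) (∑ l', w l' • x l') : ℝ) := by
      rw [inner_sum]
      congr 1; funext l'
      rw [real_inner_smul_right]; ring
    rw [h3, hsum, inner_zero_right]
  exact Matrix.exists_mulVec_eq_zero_iff.mp ⟨w, hw0, hmv⟩


lemma sgn_sq {m k : ℕ} (α : Fin m → Fin k → ZMod 2) (i : Fin m) (S : Finset (Fin k)) :
    sgn α i S * sgn α i S = 1 := by
  unfold sgn
  rw [← Finset.prod_mul_distrib]
  apply Finset.prod_eq_one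
  intro j _
  rw [← pow_add]
  exact Even.neg_one_pow ⟨(α i j).val, rfl⟩


/-- Every continuous map `f : V_{n,k} → ℝ^m` that is `(ℤ/2)^k`-equivariant
with respect to sign patterns `α_1, …, α_m` extends to a continuous equivariant
map `F : (S^{n-1})^k → ℝ^m` that vanishes whenever some `x_j` lies in the
linear span of `x_1, …, x_{j-1}`. -/
theorem stmt_9 (n k m : ℕ) (hk : 1 ≤ k) (hkn : k ≤ n)
    (α : Fin m → Fin k → ZMod 2)
    (f : {x : Fin k → EuclideanSpace ℝ (Fin n) // IsStiefelFrame n k x} →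
      EuclideanSpace ℝ (Fin m))
    (hf : Continuous f)
    (hequiv : ∀ (x : {x : Fin k → EuclideanSpace ℝ (Fin n) // IsStiefelFrame n k x})
      (j : Fin k) (hx : IsStiefelFrame n k (negAt j x.1)) (i : Fin m),
      f ⟨negAt j x.1, hx⟩ i = (-1 : ℝ) ^ (α i j).val * f x i) :
    ∃ F : {x : Fin k → EuclideanSpace ℝ (Fin n) // ∀ j, ‖x j‖ = 1} →
        EuclideanSpace ℝ (Fin m),
      Continuous F ∧
      (∀ (x : {x : Fin k → EuclideanSpace ℝ (Fin n) // ∀ j, ‖x j‖ = 1})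
        (j : Fin k) (hx : ∀ j', ‖negAt j x.1 j'‖ = 1) (i : Fin m),
        F ⟨negAt j x.1, hx⟩ i = (-1 : ℝ) ^ (α i j).val * F x i) ∧
      (∀ (x : Fin k → EuclideanSpace ℝ (Fin n)) (h₁ : ∀ j, ‖x j‖ = 1)
        (h₂ : IsStiefelFrame n k x), F ⟨x, h₁⟩ = f ⟨x, h₂⟩) ∧
      (∀ x : {x : Fin k → EuclideanSpace ℝ (Fin n) // ∀ j, ‖x j‖ = 1},
        (∃ j : Fin k, x.1 j ∈ Submodule.span ℝ (x.1 '' {i | i < j})) → F x = 0) := by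
  classical
  -- Tietze extension of f to the product of spheres
  set X := {x : Fin k → EuclideanSpace ℝ (Fin n) // ∀ j, ‖x j‖ = 1} with hX
  let s : Set X := {x | IsStiefelFrame n k x.1}
  have hs_closed : IsClosed s := by
    have hseq : s = ⋂ (i : Fin k), ⋂ (j : Fin k), ⋂ (_ : i ≠ j),
        {x : X | (inner ℝ (x.1 i) (x.1 j) : ℝ) = 0} := by
      ext x
      simp only [Set.mem_iInter, Set.mem_setOf_eq, s]
      exact ⟨fun h i j hij => h.2 i j hij, fun h => ⟨x.2, h⟩⟩
    rw [hseq]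
    refine isClosed_iInter fun i => isClosed_iInter fun j => isClosed_iInter fun _ => ?_
    exact isClosed_eq (_root_.Continuous.inner ((continuous_apply i).comp continuous_subtype_val)
      ((continuous_apply j).comp continuous_subtype_val)) continuous_const
  let f' : C(s, EuclideanSpace ℝ (Fin m)) :=
    ⟨fun y => f ⟨y.1.1, y.2⟩,
      hf.comp (Continuous.subtype_mk (continuous_subtype_val.comp continuous_subtype_val) _)⟩
  obtain ⟨G, hG⟩ := f'.exists_restrict_eq hs_closed
  have hGs : ∀ (y : X) (hy : IsStiefelFrame n k y.1), G y = f ⟨y.1, hy⟩ := by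
    intro y hy
    have h := DFunLike.congr_fun hG (⟨y, hy⟩ : s)
    simpa [ContinuousMap.restrict_apply, f'] using h
  -- flipSign at the subtype level
  let σ : Finset (Fin k) → X → X :=
    fun S x => ⟨flipSign S x.1, fun j => by rw [flipSign_norm]; exact x.2 j⟩
  have hσcont : ∀ S, Continuous (σ S) := by
    intro S
    refine Continuous.subtype_mk (continuous_pi fun j => ?_) _
    show Continuous fun a : X => (if j ∈ S then (-1:ℝ) else 1) • a.1 j
    exact (continuous_const (y := (if j ∈ S then (-1:ℝ) else 1))).smul
      ((continuous_apply (A := fun _ : Fin k => EuclideanSpace ℝ (Fin n)) j).comp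
        continuous_subtype_val)
  -- the extension
  let F : X → EuclideanSpace ℝ (Fin m) := fun x =>
    (WithLp.toLp 2 (fun i => gramDet n k x.1 * ((2:ℝ)^k)⁻¹ *
      ∑ S : Finset (Fin k), sgn α i S * G (σ S x) i) : EuclideanSpace ℝ (Fin m))
  have hFapp : ∀ (x : X) (i : Fin m), F x i = gramDet n k x.1 * ((2:ℝ)^k)⁻¹ *
      ∑ S : Finset (Fin k), sgn α i S * G (σ S x) i := fun x i => rfl
  have hgram : Continuous fun x : X => gramDet n k x.1 := by
    have hA : Continuous fun x : X =>
        Matrix.of (fun i l : Fin k => (inner ℝ (x.1 i) (x.1 l) : ℝ)) := by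
      apply continuous_matrix
      intro i l
      have h5 : Continuous fun x : X => (inner ℝ (x.1 i) (x.1 l) : ℝ) :=
        _root_.Continuous.inner ((continuous_apply i).comp continuous_subtype_val)
          ((continuous_apply l).comp continuous_subtype_val)
      exact h5
    exact hA.matrix_det
  have hFcont : Continuous F := by
    refine (PiLp.continuousLinearEquiv 2 ℝ (fun _ : Fin m => ℝ)).symm.continuous.comp
      (continuous_pi fun i => ?_)
    refine (hgram.mul continuous_const).mul (continuous_finset_sum _ fun S _ => ?_)
    exact continuous_const.mul
      ((EuclideanSpace.proj i).continuous.comp (G.continuous.comp (hσcont S)))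
  -- equivariance of f over flipSign on Stiefel frames
  have hfflip : ∀ (S : Finset (Fin k)) (x : Fin k → EuclideanSpace ℝ (Fin n))
      (hx : IsStiefelFrame n k x) (i : Fin m),
      f ⟨flipSign S x, flipSign_stiefel S hx⟩ i = sgn α i S * f ⟨x, hx⟩ i := by
    intro S
    induction S using Finset.induction_on with
    | empty =>
      intro x hx i
      have hxe : (⟨flipSign ∅ x, flipSign_stiefel ∅ hx⟩ :
          {x // IsStiefelFrame n k x}) = ⟨x, hx⟩ := Subtype.ext (flipSign_empty x)
      rw [hxe]
      simp [sgn]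
    | @insert j S hj ih =>
      intro x hx i
      have hS : IsStiefelFrame n k (flipSign S x) := flipSign_stiefel S hx
      have hneg : IsStiefelFrame n k (negAt j (flipSign S x)) := by
        rw [← flipSign_insert hj x]; exact flipSign_stiefel _ hx
      have h1 : (⟨flipSign (insert j S) x, flipSign_stiefel _ hx⟩ :
          {x // IsStiefelFrame n k x}) = ⟨negAt j (flipSign S x), hneg⟩ :=
        Subtype.ext (flipSign_insert hj x)
      rw [h1, hequiv ⟨flipSign S x, hS⟩ j hneg i, ih x hx i]
      simp only [sgn]
      rw [Finset.prod_insert hj, mul_assoc]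
  refine ⟨F, hFcont, ?_, ?_, ?_⟩
  · -- equivariance of F
    intro x j hx i
    rw [hFapp, hFapp]
    have hσneg : ∀ S : Finset (Fin k), σ S ⟨negAt j x.1, hx⟩ = σ (tog j S) x :=
      fun S => Subtype.ext (flipSign_negAt S j x.1)
    have hre : (∑ S : Finset (Fin k), sgn α i S * G (σ S ⟨negAt j x.1, hx⟩) i) =
        ∑ S : Finset (Fin k), sgn α i (tog j S) * G (σ S x) i := by
      refine Fintype.sum_equiv ((tog_involutive j).toPerm) _ _ fun S => ?_
      simp only [Function.Involutive.coe_toPerm]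
      rw [hσneg S, tog_involutive j S]
    rw [hre, gramDet_negAt]
    have hre2 : (∑ S : Finset (Fin k), sgn α i (tog j S) * G (σ S x) i) =
        (-1:ℝ)^(α i j).val * ∑ S : Finset (Fin k), sgn α i S * G (σ S x) i := by
      rw [Finset.mul_sum]
      congr 1
      funext S
      rw [sgn_symmdiff, mul_assoc]
    rw [hre2]
    ring
  · -- restriction to the Stiefel manifold
    intro x h₁ h₂
    ext i
    rw [hFapp]
    have hterm : ∀ S : Finset (Fin k),
        sgn α i S * G (σ S ⟨x, h₁⟩) i = f ⟨x, h₂⟩ i := by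
      intro S
      have hst : IsStiefelFrame n k (σ S ⟨x, h₁⟩).1 := flipSign_stiefel S h₂
      rw [hGs _ hst]
      have := hfflip S x h₂ i
      rw [this, ← mul_assoc, sgn_sq, one_mul]
    rw [Finset.sum_congr rfl (fun S _ => hterm S), Finset.sum_const, gramDet_stiefel h₂]
    simp only [Finset.card_univ, Fintype.card_finset, Fintype.card_fin, nsmul_eq_mul,
      one_mul]
    push_cast
    rw [← mul_assoc, inv_mul_cancel₀ (by positivity : ((2:ℝ)^k) ≠ 0), one_mul]
  · -- vanishing on degenerate tuples
    intro x ⟨j, hj⟩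
    ext i
    rw [hFapp, gramDet_dep hj]
    simp
end

section
/- Let 1 ≤ k ≤ n be integers, let m = k(n-1) - k(k-1)/2, and let α_1, …, α_m ∈ (ℤ/2)^k be sign patterns. Suppose there exists a continuous nowhere-zero map f : V_{n,k} → ℝ^m which is equivariant in the sense that replacing x_j by -x_j multiplies the i-th coordinate f_i(x_1, …, x_k) by (-1)^{⟨α_i, ε_j⟩} for all i, j. Then there exists a continuous nowhere-zero map F : (S^{n-1})^k → ℝ^m × ℝ^{k(k-1)/2} which is equivariant in the sense that replacing x_j by -x_j multiplies the i-th coordinate of the first factor by (-1)^{⟨α_i, ε_j⟩} for each i ∈ {1, …, m}, and multiplies the coordinate of the second factor indexed by a pair 1 ≤ p < q ≤ k by -1 exactly when j ∈ {p, q} and leaves it unchanged otherwise. -/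
namespace Stmt10Aux

variable {n k : ℕ}

/-- Negate the coordinates selected by `ε`. -/
def actS (ε : Fin k → Bool) (x : Fin k → EuclideanSpace ℝ (Fin n)) :
    Fin k → EuclideanSpace ℝ (Fin n) :=
  fun j => if ε j then -(x j) else x j

lemma actS_norm (ε : Fin k → Bool) (x : Fin k → EuclideanSpace ℝ (Fin n)) (j : Fin k) :
    ‖actS ε x j‖ = ‖x j‖ := by
  unfold actS; cases h : ε j <;> simp [h]

lemma frame_actS (ε : Fin k → Bool) {x : Fin k → EuclideanSpace ℝ (Fin n)}
    (hx : IsStiefelFrame n k x) : IsStiefelFrame n k (actS ε x) := by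
  refine ⟨fun j => by rw [actS_norm]; exact hx.1 j, fun i j hij => ?_⟩
  unfold actS
  cases hi : ε i <;> cases hj : ε j <;>
    simp [hi, hj, inner_neg_left, inner_neg_right, hx.2 i j hij]

lemma frame_negAt (j : Fin k) {x : Fin k → EuclideanSpace ℝ (Fin n)}
    (hx : IsStiefelFrame n k x) : IsStiefelFrame n k (negAt j x) := by
  constructor
  · intro j'
    rcases eq_or_ne j' j with rfl | h
    · simp [negAt, hx.1]
    · simp [negAt, Function.update_of_ne h, hx.1]
  · intro a b hab
    have h0 := hx.2 a b hab
    simp only [negAt, Function.update_apply]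
    split_ifs with h1 h2 h3
    · exact absurd (h1.trans h2.symm) hab
    · subst h1; rw [inner_neg_left, h0, neg_zero]
    · subst h3; rw [inner_neg_right, h0, neg_zero]
    · exact h0

lemma actS_negAt (ε : Fin k → Bool) (j : Fin k) (x : Fin k → EuclideanSpace ℝ (Fin n)) :
    actS ε (negAt j x) = actS (Function.update ε j (!ε j)) x := by
  funext j'
  rcases eq_or_ne j' j with rfl | h
  · simp only [actS, negAt, Function.update_self]
    cases hj : ε j' <;> simp [hj]
  · simp only [actS, negAt, Function.update_of_ne h]

lemma actS_empty (x : Fin k → EuclideanSpace ℝ (Fin n)) :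
    actS (fun _ => false) x = x := by
  funext j'; simp [actS]

end Stmt10Aux

namespace Stmt10Aux

variable {n k m : ℕ}

/-- The character of `(ℤ/2)^k` associated with the sign pattern `α i`. -/
def sgn (α : Fin m → Fin k → ZMod 2) (i : Fin m) (ε : Fin k → Bool) : ℝ :=
  ∏ j, if ε j then (-1 : ℝ) ^ (α i j).val else 1

lemma neg_one_pow_mul_self (v : ℕ) : (-1 : ℝ) ^ v * (-1 : ℝ) ^ v = 1 := by
  rw [← pow_add]; exact Even.neg_one_pow ⟨v, rfl⟩

lemma sgn_mul_self (α : Fin m → Fin k → ZMod 2) (i : Fin m) (ε : Fin k → Bool) :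
    sgn α i ε * sgn α i ε = 1 := by
  unfold sgn
  rw [← Finset.prod_mul_distrib]
  refine Finset.prod_eq_one fun j _ => ?_
  cases h : ε j <;> simp [neg_one_pow_mul_self]

lemma sgn_update (α : Fin m → Fin k → ZMod 2) (i : Fin m) (ε : Fin k → Bool) (j : Fin k) :
    sgn α i (Function.update ε j (!ε j)) = (-1 : ℝ) ^ (α i j).val * sgn α i ε := by
  set c : Fin k → ℝ := fun j' => (-1 : ℝ) ^ (α i j').val with hc
  set g : Fin k → ℝ := fun j' => if ε j' then c j' else 1 with hg
  have h1 : (fun j' => if Function.update ε j (!ε j) j' then c j' else 1)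
      = Function.update g j (if !ε j then c j else 1) := by
    funext j'
    rcases eq_or_ne j' j with rfl | h
    · simp
    · simp [Function.update_of_ne h, hg]
  have h2 : sgn α i (Function.update ε j (!ε j))
      = (if !ε j then c j else 1) * ∏ j' ∈ Finset.univ \ {j}, g j' := by
    unfold sgn
    rw [show (∏ j', if Function.update ε j (!ε j) j' then c j' else 1)
        = ∏ j', Function.update g j (if !ε j then c j else 1) j' from by rw [h1]]
    exact Finset.prod_update_of_mem (Finset.mem_univ j) g _
  have h3 : sgn α i ε = g j * ∏ j' ∈ Finset.univ \ {j}, g j' := by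
    rw [← Finset.erase_eq]
    exact (Finset.mul_prod_erase _ g (Finset.mem_univ j)).symm
  have h4 : (if !ε j then c j else 1) = c j * g j := by
    cases h : ε j
    · simp [hg, h]
    · simp only [hg, h, Bool.not_true, if_false, if_pos]
      exact (neg_one_pow_mul_self _).symm
  rw [h2, h3, h4, hc]; ring

lemma sgn_finset (α : Fin m → Fin k → ZMod 2) (i : Fin m) (S : Finset (Fin k)) :
    sgn α i (fun j => decide (j ∈ S)) = ∏ j ∈ S, (-1 : ℝ) ^ (α i j).val := by
  unfold sgn
  rw [show S = Finset.univ.filter (· ∈ S) from by simp, Finset.prod_filter]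
  simp

lemma key (α : Fin m → Fin k → ZMod 2)
    (f : {x : Fin k → EuclideanSpace ℝ (Fin n) // IsStiefelFrame n k x} →
      EuclideanSpace ℝ (Fin m))
    (hf : ∀ (x : {x : Fin k → EuclideanSpace ℝ (Fin n) // IsStiefelFrame n k x})
        (j : Fin k) (hx : IsStiefelFrame n k (negAt j x.1)) (i : Fin m),
        f ⟨negAt j x.1, hx⟩ i = (-1 : ℝ) ^ (α i j).val * f x i)
    (S : Finset (Fin k)) (x : Fin k → EuclideanSpace ℝ (Fin n))
    (hx : IsStiefelFrame n k x)
    (hS : IsStiefelFrame n k (actS (fun j => decide (j ∈ S)) x)) (i : Fin m) :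
    f ⟨actS (fun j => decide (j ∈ S)) x, hS⟩ i
      = (∏ j ∈ S, (-1 : ℝ) ^ (α i j).val) * f ⟨x, hx⟩ i := by
  induction S using Finset.induction_on with
  | empty =>
    have h : actS (fun j => decide (j ∈ (∅ : Finset (Fin k)))) x = x := by
      funext j'; simp [actS]
    have : (⟨actS (fun j => decide (j ∈ (∅ : Finset (Fin k)))) x, hS⟩ :
        {x // IsStiefelFrame n k x}) = ⟨x, hx⟩ := Subtype.ext h
    rw [this, Finset.prod_empty, one_mul]
  | @insert a S ha ih =>
    have hold : IsStiefelFrame n k (actS (fun j => decide (j ∈ S)) x) :=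
      frame_actS _ hx
    have hnew : actS (fun j => decide (j ∈ insert a S)) x
        = negAt a (actS (fun j => decide (j ∈ S)) x) := by
      funext j'
      rcases eq_or_ne j' a with rfl | h
      · have : j' ∉ S := ha
        simp [actS, negAt, this]
      · simp [actS, negAt, Function.update_of_ne h, Finset.mem_insert, h]
    have hneg : IsStiefelFrame n k (negAt a (actS (fun j => decide (j ∈ S)) x)) :=
      frame_negAt _ hold
    have heq : (⟨actS (fun j => decide (j ∈ insert a S)) x, hS⟩ :
        {x // IsStiefelFrame n k x})
        = ⟨negAt a (actS (fun j => decide (j ∈ S)) x), hneg⟩ := Subtype.ext hnew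
    rw [heq, hf ⟨actS (fun j => decide (j ∈ S)) x, hold⟩ a hneg i, ih hold,
      Finset.prod_insert ha]
    ring

end Stmt10Aux

namespace Stmt10Aux

variable {n k m : ℕ}

def actX (ε : Fin k → Bool) (x : {x : Fin k → EuclideanSpace ℝ (Fin n) // ∀ j, ‖x j‖ = 1}) :
    {x : Fin k → EuclideanSpace ℝ (Fin n) // ∀ j, ‖x j‖ = 1} :=
  ⟨actS ε x.1, fun j => by rw [actS_norm]; exact x.2 j⟩

lemma continuous_actX (ε : Fin k → Bool) : Continuous (actX (n := n) (k := k) ε) := by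
  refine Continuous.subtype_mk (continuous_pi fun j => ?_) _
  unfold actS
  cases h : ε j
  · simp only [h, Bool.false_eq_true, if_false]
    exact (continuous_apply j).comp continuous_subtype_val
  · simp only [h, if_true]
    exact ((continuous_apply j).comp continuous_subtype_val).neg

lemma updBool_involutive (j : Fin k) :
    Function.Involutive (fun ε : Fin k → Bool => Function.update ε j (!ε j)) := by
  intro ε; funext j'
  rcases eq_or_ne j' j with rfl | h
  · simp
  · simp [Function.update_of_ne h]

def flipEquiv (j : Fin k) : (Fin k → Bool) ≃ (Fin k → Bool) :=
  (updBool_involutive j).toPerm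

lemma actX_negAt (ε : Fin k → Bool) (j : Fin k)
    (x : {x : Fin k → EuclideanSpace ℝ (Fin n) // ∀ j, ‖x j‖ = 1})
    (hx : ∀ j', ‖negAt j x.1 j'‖ = 1) :
    actX ε (⟨negAt j x.1, hx⟩ : {x : Fin k → EuclideanSpace ℝ (Fin n) // ∀ j, ‖x j‖ = 1})
      = actX (Function.update ε j (!ε j)) x :=
  Subtype.ext (actS_negAt ε j x.1)

end Stmt10Aux


open Stmt10Aux

/-- If there is a continuous nowhere-zero `(ℤ/2)^k`-equivariant (with respect
to sign patterns `α_1, …, α_m`, `m = k(n-1) - k(k-1)/2`) map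
`f : V_{n,k} → ℝ^m`, then there is a continuous nowhere-zero equivariant map
`F : (S^{n-1})^k → ℝ^m × ℝ^{k(k-1)/2}`, where the coordinate of the second
factor indexed by a pair `p < q` is negated by negating `x_j` exactly when
`j ∈ {p, q}`. -/
theorem stmt_10 (n k : ℕ) (hk : 1 ≤ k) (hkn : k ≤ n)
    (m : ℕ) (hm : m = k * (n - 1) - k * (k - 1) / 2)
    (α : Fin m → Fin k → ZMod 2)
    (hex : ∃ f : {x : Fin k → EuclideanSpace ℝ (Fin n) // IsStiefelFrame n k x} →
        EuclideanSpace ℝ (Fin m),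
      Continuous f ∧ (∀ x, f x ≠ 0) ∧
      ∀ (x : {x : Fin k → EuclideanSpace ℝ (Fin n) // IsStiefelFrame n k x})
        (j : Fin k) (hx : IsStiefelFrame n k (negAt j x.1)) (i : Fin m),
        f ⟨negAt j x.1, hx⟩ i = (-1 : ℝ) ^ (α i j).val * f x i) :
    ∃ F : {x : Fin k → EuclideanSpace ℝ (Fin n) // ∀ j, ‖x j‖ = 1} →
        EuclideanSpace ℝ (Fin m) × ({p : Fin k × Fin k // p.1 < p.2} → ℝ),
      Continuous F ∧ (∀ x, F x ≠ 0) ∧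
      ∀ (x : {x : Fin k → EuclideanSpace ℝ (Fin n) // ∀ j, ‖x j‖ = 1})
        (j : Fin k) (hx : ∀ j', ‖negAt j x.1 j'‖ = 1),
        (∀ i : Fin m,
          (F ⟨negAt j x.1, hx⟩).1 i = (-1 : ℝ) ^ (α i j).val * (F x).1 i) ∧
        ∀ p : {p : Fin k × Fin k // p.1 < p.2},
          (F ⟨negAt j x.1, hx⟩).2 p =
            if j = p.1.1 ∨ j = p.1.2 then -((F x).2 p) else (F x).2 p := by
  classical
  obtain ⟨f, hfc, hfne, hfeq⟩ := hex
  set s : Set {x : Fin k → EuclideanSpace ℝ (Fin n) // ∀ j, ‖x j‖ = 1} :=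
    {x | IsStiefelFrame n k x.1} with hs_def
  -- the frame set is closed
  have hs : IsClosed s := by
    have hrw : s = ⋂ (i : Fin k), ⋂ (j : Fin k),
        {x : {x : Fin k → EuclideanSpace ℝ (Fin n) // ∀ j, ‖x j‖ = 1} |
          i ≠ j → inner ℝ (x.1 i) (x.1 j) = (0 : ℝ)} := by
      ext x
      simp only [hs_def, Set.mem_setOf_eq, Set.mem_iInter, IsStiefelFrame]
      exact ⟨fun h i j => h.2 i j, fun h => ⟨x.2, h⟩⟩
    rw [hrw]
    refine isClosed_iInter fun i => isClosed_iInter fun j => ?_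
    by_cases hij : i = j
    · subst hij
      convert isClosed_univ using 1
      ext x; simp
    · have : {x : {x : Fin k → EuclideanSpace ℝ (Fin n) // ∀ j, ‖x j‖ = 1} |
          i ≠ j → inner ℝ (x.1 i) (x.1 j) = (0 : ℝ)}
          = {x | inner ℝ (x.1 i) (x.1 j) = (0 : ℝ)} := by
        ext x; simp [hij]
      rw [this]
      exact isClosed_eq
        (Continuous.inner ((continuous_apply i).comp continuous_subtype_val)
          ((continuous_apply j).comp continuous_subtype_val)) continuous_const
  -- Tietze extension of f to the whole product of spheres
  have hφ : Continuous (fun y : s =>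
      (⟨y.1.1, y.2⟩ : {x : Fin k → EuclideanSpace ℝ (Fin n) // IsStiefelFrame n k x})) :=
    Continuous.subtype_mk (continuous_subtype_val.comp continuous_subtype_val) _
  obtain ⟨g, hg⟩ := ContinuousMap.exists_restrict_eq hs
    (⟨fun y => f ⟨y.1.1, y.2⟩, hfc.comp hφ⟩ :
      C(s, EuclideanSpace ℝ (Fin m)))
  have hgval : ∀ (z : {x : Fin k → EuclideanSpace ℝ (Fin n) // ∀ j, ‖x j‖ = 1})
      (hz : IsStiefelFrame n k z.1), g z = f ⟨z.1, hz⟩ := by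
    intro z hz
    exact DFunLike.congr_fun hg (⟨z, hz⟩ : s)
  -- the averaged map and the map of inner products
  refine ⟨fun x =>
    ((WithLp.toLp 2 (fun i => ∑ ε : Fin k → Bool, sgn α i ε * g (actX ε x) i) :
        EuclideanSpace ℝ (Fin m)),
      fun p => inner ℝ (x.1 p.1.1) (x.1 p.1.2)), ?_, ?_, ?_⟩
  · -- continuity
    refine Continuous.prodMk ?_ ?_
    · refine (PiLp.continuous_toLp 2 (fun _ : Fin m => ℝ)).comp
        (continuous_pi fun i => ?_)
      refine continuous_finset_sum _ fun ε _ => Continuous.mul continuous_const ?_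
      exact ((continuous_apply i).comp (PiLp.continuous_ofLp 2 (fun _ : Fin m => ℝ))).comp
        (g.continuous.comp (continuous_actX ε))
    · refine continuous_pi fun p => ?_
      exact Continuous.inner ((continuous_apply p.1.1).comp continuous_subtype_val)
        ((continuous_apply p.1.2).comp continuous_subtype_val)
  · -- nowhere zero
    intro x hx0
    have h1 : (WithLp.toLp 2 (fun i => ∑ ε : Fin k → Bool, sgn α i ε * g (actX ε x) i) :
        EuclideanSpace ℝ (Fin m)) = 0 := congrArg Prod.fst hx0
    have h2 : (fun p : {p : Fin k × Fin k // p.1 < p.2} =>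
        (inner ℝ (x.1 p.1.1) (x.1 p.1.2) : ℝ)) = 0 := congrArg Prod.snd hx0
    -- x is a Stiefel frame
    have hframe : IsStiefelFrame n k x.1 := by
      refine ⟨x.2, fun i j hij => ?_⟩
      rcases lt_trichotomy i j with h | h | h
      · exact congrFun h2 ⟨(i, j), h⟩
      · exact absurd h hij
      · rw [real_inner_comm]
        exact congrFun h2 ⟨(j, i), h⟩
    -- the averaged map equals (2^k) • f on frames
    have hval : ∀ ε : Fin k → Bool, ∀ i : Fin m,
        g (actX ε x) i = sgn α i ε * f ⟨x.1, hframe⟩ i := by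
      intro ε i
      have hmem : IsStiefelFrame n k (actX ε x).1 := frame_actS ε hframe
      rw [hgval _ hmem]
      have hε : ε = fun j => decide (j ∈ Finset.univ.filter (fun j' => ε j' = true)) := by
        funext j; cases h : ε j <;> simp [h]
      have hS : IsStiefelFrame n k
          (actS (fun j => decide (j ∈ Finset.univ.filter (fun j' => ε j' = true))) x.1) := by
        rw [← hε]; exact hmem
      have hsub : (⟨(actX ε x).1, hmem⟩ :
          {x : Fin k → EuclideanSpace ℝ (Fin n) // IsStiefelFrame n k x})
          = ⟨actS (fun j => decide (j ∈ Finset.univ.filter (fun j' => ε j' = true))) x.1,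
            hS⟩ := by
        exact Subtype.ext (congrArg (fun e => actS e x.1) hε)
      rw [hsub, key α f hfeq _ x.1 hframe hS i, ← sgn_finset α i, ← hε]
    exfalso
    apply hfne ⟨x.1, hframe⟩
    have hcoord : ∀ i : Fin m, f ⟨x.1, hframe⟩ i = 0 := by
      intro i
      have hzero : (∑ ε : Fin k → Bool, sgn α i ε * g (actX ε x) i) = 0 := congrArg (fun v : EuclideanSpace ℝ (Fin m) => v i) h1
      have hrw : (∑ ε : Fin k → Bool, sgn α i ε * g (actX ε x) i)
          = ∑ _ε : Fin k → Bool, f ⟨x.1, hframe⟩ i :=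
        Finset.sum_congr rfl fun ε _ => by
          rw [hval ε i, ← mul_assoc, sgn_mul_self, one_mul]
      rw [hrw, Finset.sum_const, nsmul_eq_mul] at hzero
      have hcard : (0 : ℝ) < ((Finset.univ : Finset (Fin k → Bool)).card : ℝ) := by
        have := Fintype.card_pos (α := Fin k → Bool)
        rw [Finset.card_univ]
        exact_mod_cast this
      exact (mul_eq_zero.mp hzero).resolve_left (ne_of_gt hcard)
    ext i
    exact hcoord i
  · -- equivariance
    intro x j hx
    constructor
    · intro i
      show (∑ ε : Fin k → Bool, sgn α i ε * g (actX ε ⟨negAt j x.1, hx⟩) i)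
        = (-1 : ℝ) ^ (α i j).val * ∑ ε : Fin k → Bool, sgn α i ε * g (actX ε x) i
      have step1 : (∑ ε : Fin k → Bool, sgn α i ε * g (actX ε ⟨negAt j x.1, hx⟩) i)
          = ∑ ε : Fin k → Bool, sgn α i (Function.update ε j (!ε j)) * g (actX ε x) i := by
        refine Fintype.sum_equiv (flipEquiv j) _ _ fun ε => ?_
        rw [actX_negAt]
        show sgn α i ε * g (actX (Function.update ε j (!ε j)) x) i
          = sgn α i (Function.update (Function.update ε j (!ε j)) j
              (!(Function.update ε j (!ε j)) j)) * g (actX (Function.update ε j (!ε j)) x) i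
        have hinv : Function.update (Function.update ε j (!ε j)) j
            (!(Function.update ε j (!ε j)) j) = ε := updBool_involutive j ε
        rw [hinv]
      rw [step1, Finset.mul_sum]
      refine Finset.sum_congr rfl fun ε _ => ?_
      rw [sgn_update, mul_assoc]
    · intro p
      have hne : p.1.1 ≠ p.1.2 := ne_of_lt p.2
      show (inner ℝ (negAt j x.1 p.1.1) (negAt j x.1 p.1.2) : ℝ) = _
      simp only [negAt, Function.update_apply]
      by_cases h1 : j = p.1.1
      · have h2 : ¬ j = p.1.2 := fun h => hne (h1.symm.trans h)
        rw [if_pos h1.symm, if_neg (fun h => h2 h.symm), if_pos (Or.inl h1),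
          inner_neg_left, ← h1]
      · by_cases h2 : j = p.1.2
        · rw [if_neg (fun h => h1 h.symm), if_pos h2.symm, if_pos (Or.inr h2),
            inner_neg_right, ← h2]
        · rw [if_neg (fun h => h1 h.symm), if_neg (fun h => h2 h.symm),
            if_neg (by tauto)]
end

section
/- Let 1 ≤ k ≤ n be integers, and let M be the space of all k-tuples (x_1, …, x_k) of pairwise orthogonal unit vectors in ℝ^n such that, for each j ∈ {1, …, k}, the last k - j coordinates of x_j are zero. Suppose there exists a continuous nowhere-zero map f : M → (ℝ^{n-k})^k, with components f = (f_1, …, f_k), such that replacing x_j by -x_j replaces f_j by -f_j and leaves f_i unchanged for i ≠ j. Then there exists a continuous nowhere-zero map F : V_{n,k} → (ℝ^{n-k})^k × ℝ^{k(k-1)/2} such that: the first factor has components F_1, …, F_k with F_j : V_{n,k} → ℝ^{n-k}, and replacing x_j by -x_j replaces F_j by -F_j and leaves F_i unchanged for i ≠ j; the second factor has coordinates indexed by pairs (ℓ, i) with 1 ≤ ℓ ≤ k-1 and 1 ≤ i ≤ k-ℓ, and replacing x_j by -x_j negates the coordinate indexed by (ℓ, i) exactly when j = ℓ and leaves it unchanged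 otherwise. -/
/-- The submanifold `M ⊆ V_{n,k}`: additionally, for each `j` (0-indexed) the
last `k - (j+1)` coordinates of `x j` vanish. -/
def IsFlagFrame (n k : ℕ) (x : Fin k → EuclideanSpace ℝ (Fin n)) : Prop :=
  IsStiefelFrame n k x ∧ ∀ (j : Fin k) (i : Fin n), n - k + j.1 + 1 ≤ i.1 → x j i = 0

namespace Stmt12

variable {n k : ℕ}

def actS (s : Fin k → Bool) (x : Fin k → EuclideanSpace ℝ (Fin n)) :
    Fin k → EuclideanSpace ℝ (Fin n) := fun j => if s j then -(x j) else x j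

noncomputable def sgnS (s : Fin k → Bool) (j : Fin k) : ℝ := if s j then -1 else 1

lemma actS_stiefel {s : Fin k → Bool} {x} (h : IsStiefelFrame n k x) :
    IsStiefelFrame n k (actS s x) := by
  obtain ⟨h1, h2⟩ := h
  refine ⟨fun j => ?_, fun i j hij => ?_⟩
  · unfold actS; split <;> simp [h1 j]
  · unfold actS
    split <;> split <;> simp [inner_neg_left, inner_neg_right, h2 i j hij]

lemma actS_flag {s : Fin k → Bool} {x} (h : IsFlagFrame n k x) :
    IsFlagFrame n k (actS s x) := by
  refine ⟨actS_stiefel h.1, fun j i hi => ?_⟩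
  have := h.2 j i hi
  unfold actS
  split <;> simp_all

lemma actS_actS (s t : Fin k → Bool) (x : Fin k → EuclideanSpace ℝ (Fin n)) :
    actS s (actS t x) = actS (fun i => xor (s i) (t i)) x := by
  funext j
  unfold actS
  cases hs : s j <;> cases ht : t j <;> simp [hs, ht]

lemma negAt_eq_actS (j : Fin k) (x : Fin k → EuclideanSpace ℝ (Fin n)) :
    negAt j x = actS (fun i => decide (i = j)) x := by
  funext i
  unfold negAt actS
  rw [Function.update_apply]
  by_cases h : i = j <;> simp [h]

lemma actS_insert {a : Fin k} {T : Finset (Fin k)} (ha : a ∉ T)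
    (x : Fin k → EuclideanSpace ℝ (Fin n)) :
    actS (fun i => decide (i ∈ insert a T)) x =
      negAt a (actS (fun i => decide (i ∈ T)) x) := by
  funext i
  unfold negAt actS
  rw [Function.update_apply]
  by_cases h : i = a
  · subst h; simp [ha]
  · simp [h, Finset.mem_insert]

lemma f_equiv
    (f : {x : Fin k → EuclideanSpace ℝ (Fin n) // IsFlagFrame n k x} →
      Fin k → EuclideanSpace ℝ (Fin (n - k)))
    (hequiv : ∀ (x : {x : Fin k → EuclideanSpace ℝ (Fin n) // IsFlagFrame n k x})
      (j : Fin k) (hx : IsFlagFrame n k (negAt j x.1)),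
      f ⟨negAt j x.1, hx⟩ j = -(f x j) ∧
        ∀ i, i ≠ j → f ⟨negAt j x.1, hx⟩ i = f x i) :
    ∀ (T : Finset (Fin k)) (x : {x : Fin k → EuclideanSpace ℝ (Fin n) // IsFlagFrame n k x})
      (hx : IsFlagFrame n k (actS (fun i => decide (i ∈ T)) x.1)) (j : Fin k),
      f ⟨actS (fun i => decide (i ∈ T)) x.1, hx⟩ j =
        (if j ∈ T then (-1 : ℝ) else 1) • f x j := by
  intro T
  induction T using Finset.induction_on with
  | empty =>
    intro x hx j
    have he : actS (fun i => decide (i ∈ (∅ : Finset (Fin k)))) x.1 = x.1 := by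
      funext i; simp [actS]
    have : (⟨actS (fun i => decide (i ∈ (∅ : Finset (Fin k)))) x.1, hx⟩ :
        {x : Fin k → EuclideanSpace ℝ (Fin n) // IsFlagFrame n k x}) = x :=
      Subtype.ext he
    rw [this]; simp
  | @insert a T ha ih =>
    intro x hx j
    have hT : IsFlagFrame n k (actS (fun i => decide (i ∈ T)) x.1) := actS_flag x.2
    set y : {x : Fin k → EuclideanSpace ℝ (Fin n) // IsFlagFrame n k x} :=
      ⟨actS (fun i => decide (i ∈ T)) x.1, hT⟩ with hy
    have heq : actS (fun i => decide (i ∈ insert a T)) x.1 = negAt a y.1 :=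
      actS_insert ha x.1
    have hx' : IsFlagFrame n k (negAt a y.1) := heq ▸ hx
    have hpt : (⟨actS (fun i => decide (i ∈ insert a T)) x.1, hx⟩ :
        {x : Fin k → EuclideanSpace ℝ (Fin n) // IsFlagFrame n k x}) = ⟨negAt a y.1, hx'⟩ :=
      Subtype.ext heq
    rw [hpt]
    by_cases hja : j = a
    · subst hja
      rw [(hequiv y j hx').1, ih x hT j]
      simp [ha, Finset.mem_insert]
    · rw [(hequiv y a hx').2 j hja, ih x hT j]
      simp [Finset.mem_insert, hja]

end Stmt12

/-- If there is a continuous nowhere-zero `(ℤ/2)^k`-equivariant map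
`f : M → (ℝ^{n-k})^k`, then there is a continuous nowhere-zero equivariant map
`F : V_{n,k} → (ℝ^{n-k})^k × ℝ^{k(k-1)/2}`, where the coordinates of the
second factor are indexed by pairs `(ℓ, i)` with `1 ≤ ℓ ≤ k-1`, `1 ≤ i ≤ k-ℓ`
(encoded 0-indexed by pairs `p` with `p.1 + p.2 + 2 ≤ k`), and the coordinate
indexed by `(ℓ, i)` is negated by negating `x_j` exactly when `j = ℓ`. -/
theorem stmt_12 (n k : ℕ) (hk : 1 ≤ k) (hkn : k ≤ n)
    (f : {x : Fin k → EuclideanSpace ℝ (Fin n) // IsFlagFrame n k x} →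
      Fin k → EuclideanSpace ℝ (Fin (n - k)))
    (hf : Continuous f) (hfz : ∀ x, f x ≠ 0)
    (hequiv : ∀ (x : {x : Fin k → EuclideanSpace ℝ (Fin n) // IsFlagFrame n k x})
      (j : Fin k) (hx : IsFlagFrame n k (negAt j x.1)),
      f ⟨negAt j x.1, hx⟩ j = -(f x j) ∧
        ∀ i, i ≠ j → f ⟨negAt j x.1, hx⟩ i = f x i) :
    ∃ F : {x : Fin k → EuclideanSpace ℝ (Fin n) // IsStiefelFrame n k x} →
        (Fin k → EuclideanSpace ℝ (Fin (n - k))) ×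
          ({p : Fin k × Fin k // p.1.1 + p.2.1 + 2 ≤ k} → ℝ),
      Continuous F ∧ (∀ x, F x ≠ 0) ∧
      ∀ (x : {x : Fin k → EuclideanSpace ℝ (Fin n) // IsStiefelFrame n k x})
        (j : Fin k) (hx : IsStiefelFrame n k (negAt j x.1)),
        ((F ⟨negAt j x.1, hx⟩).1 j = -((F x).1 j) ∧
          ∀ i, i ≠ j → (F ⟨negAt j x.1, hx⟩).1 i = (F x).1 i) ∧
        ∀ p : {p : Fin k × Fin k // p.1.1 + p.2.1 + 2 ≤ k},
          (F ⟨negAt j x.1, hx⟩).2 p =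
            if j = p.1.1 then -((F x).2 p) else (F x).2 p := by
  classical
  haveI : TietzeExtension (Fin k → EuclideanSpace ℝ (Fin (n - k))) :=
    TietzeExtension.of_tvs ℝ
  set Mset : Set {x : Fin k → EuclideanSpace ℝ (Fin n) // IsStiefelFrame n k x} :=
    {y | IsFlagFrame n k y.1} with hMset
  have hMc : IsClosed Mset := by
    have : Mset = ⋂ (j : Fin k), ⋂ (i : Fin n),
        {y : {x : Fin k → EuclideanSpace ℝ (Fin n) // IsStiefelFrame n k x} |
          n - k + j.1 + 1 ≤ i.1 → y.1 j i = 0} := by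
      ext y
      simp only [hMset, Set.mem_setOf_eq, Set.mem_iInter, IsFlagFrame]
      exact ⟨fun h j i hi => h.2 j i hi, fun h => ⟨y.2, h⟩⟩
    rw [this]
    refine isClosed_iInter fun j => isClosed_iInter fun i => ?_
    by_cases hc : n - k + j.1 + 1 ≤ i.1
    · have he : {y : {x : Fin k → EuclideanSpace ℝ (Fin n) // IsStiefelFrame n k x} |
          n - k + j.1 + 1 ≤ i.1 → y.1 j i = 0} = {y | y.1 j i = 0} := by
        ext y; simp [hc]
      rw [he]
      exact isClosed_eq ((EuclideanSpace.proj i).continuous.comp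
        ((continuous_apply j).comp continuous_subtype_val)) continuous_const
    · have he : {y : {x : Fin k → EuclideanSpace ℝ (Fin n) // IsStiefelFrame n k x} |
          n - k + j.1 + 1 ≤ i.1 → y.1 j i = 0} = Set.univ := by
        ext y; simp [hc]
      rw [he]; exact isClosed_univ
  let f' : C(Mset, Fin k → EuclideanSpace ℝ (Fin (n - k))) :=
    ⟨fun y => f ⟨y.1.1, y.2⟩,
      hf.comp (Continuous.subtype_mk (continuous_subtype_val.comp continuous_subtype_val) _)⟩
  obtain ⟨g, hg⟩ := ContinuousMap.exists_restrict_eq hMc f'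
  have hgval : ∀ (z : {x : Fin k → EuclideanSpace ℝ (Fin n) // IsStiefelFrame n k x})
      (hz : z ∈ Mset), g z = f ⟨z.1, hz⟩ := by
    intro z hz
    have := DFunLike.congr_fun hg (⟨z, hz⟩ : Mset)
    simpa [ContinuousMap.restrict_apply, f'] using this
  let actA : (Fin k → Bool) → {x : Fin k → EuclideanSpace ℝ (Fin n) // IsStiefelFrame n k x} →
      {x : Fin k → EuclideanSpace ℝ (Fin n) // IsStiefelFrame n k x} :=
    fun s y => ⟨Stmt12.actS s y.1, Stmt12.actS_stiefel y.2⟩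
  have hactA : ∀ s, Continuous (actA s) := by
    intro s
    refine Continuous.subtype_mk (continuous_pi fun j => ?_) _
    simp only [Stmt12.actS]
    cases hsj : s j
    · simp only [hsj, Bool.false_eq_true, ↓reduceIte]
      exact (continuous_apply j).comp continuous_subtype_val
    · simp only [hsj, ↓reduceIte]
      exact ((continuous_apply j).comp continuous_subtype_val).neg
  have key : ∀ (y : {x : Fin k → EuclideanSpace ℝ (Fin n) // IsStiefelFrame n k x})
      (hy : IsFlagFrame n k y.1) (j : Fin k),
      ∑ s : Fin k → Bool, Stmt12.sgnS s j • g (actA s y) j = (2 ^ k : ℝ) • f ⟨y.1, hy⟩ j := by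
    intro y hy j
    have hterm : ∀ s : Fin k → Bool,
        Stmt12.sgnS s j • g (actA s y) j = f ⟨y.1, hy⟩ j := by
      intro s
      have hmem : actA s y ∈ Mset := Stmt12.actS_flag hy
      rw [hgval _ hmem]
      set T : Finset (Fin k) := Finset.univ.filter (fun i => s i) with hT
      have hs : s = fun i => decide (i ∈ T) := by
        funext i; by_cases h : s i <;> simp [hT, h]
      have hx2 : IsFlagFrame n k (Stmt12.actS (fun i => decide (i ∈ T)) y.1) := by
        rw [← hs]; exact hmem
      have hpt : (⟨(actA s y).1, hmem⟩ :
          {x : Fin k → EuclideanSpace ℝ (Fin n) // IsFlagFrame n k x}) =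
          ⟨Stmt12.actS (fun i => decide (i ∈ T)) y.1, hx2⟩ := by
        apply Subtype.ext
        show Stmt12.actS s y.1 = Stmt12.actS (fun i => decide (i ∈ T)) y.1
        exact congrArg (fun t => Stmt12.actS t y.1) hs
      rw [hpt, Stmt12.f_equiv f hequiv T ⟨y.1, hy⟩ hx2 j]
      have hsg : Stmt12.sgnS s j = (if j ∈ T then (-1 : ℝ) else 1) := by
        by_cases h : s j <;> simp [Stmt12.sgnS, hT, h]
      rw [hsg, smul_smul]
      by_cases h : j ∈ T <;> simp [h]
    rw [Finset.sum_congr rfl (fun s _ => hterm s), Finset.sum_const, Finset.card_univ]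
    have hcard : Fintype.card (Fin k → Bool) = 2 ^ k := by simp
    rw [hcard, ← Nat.cast_smul_eq_nsmul ℝ]
    norm_num
  refine ⟨fun y => (fun j => ∑ s : Fin k → Bool, Stmt12.sgnS s j • g (actA s y) j,
      fun p => y.1 p.1.1 ⟨n - k + p.1.1.1 + 1 + p.1.2.1, by have := p.2; omega⟩),
    ?_, ?_, ?_⟩
  · refine Continuous.prodMk ?_ ?_
    · refine continuous_pi fun j => continuous_finset_sum _ (fun s _ => ?_)
      exact ((continuous_apply j).comp (g.continuous.comp (hactA s))).const_smul (Stmt12.sgnS s j)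
    · refine continuous_pi fun p => ?_
      exact (EuclideanSpace.proj _).continuous.comp
        ((continuous_apply p.1.1).comp continuous_subtype_val)
  · intro y
    by_cases hy : IsFlagFrame n k y.1
    · have hfz' := hfz ⟨y.1, hy⟩
      rw [Function.ne_iff] at hfz'
      obtain ⟨j, hj⟩ := hfz'
      intro hzero
      have h2 := congrFun (congrArg Prod.fst hzero) j
      simp only [key y hy j] at h2
      have : f ⟨y.1, hy⟩ j = 0 := by
        have h2' : (2 ^ k : ℝ) • f ⟨y.1, hy⟩ j = 0 := h2
        rcases smul_eq_zero.mp h2' with h | h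
        · exact absurd h (by positivity)
        · exact h
      exact hj this
    · have hne : ¬ ∀ (j : Fin k) (i : Fin n), n - k + j.1 + 1 ≤ i.1 → y.1 j i = 0 :=
        fun h => hy ⟨y.2, h⟩
      push_neg at hne
      obtain ⟨j, i, hile, hvne⟩ := hne
      have hjk := j.2
      have hin := i.2
      have h1 : j.1 + (i.1 - (n - k + j.1 + 1)) + 2 ≤ k := by omega
      intro hzero
      have h2 := congrFun (congrArg Prod.snd hzero)
        ⟨(j, ⟨i.1 - (n - k + j.1 + 1), by omega⟩), h1⟩
      apply hvne
      have hieq : i = ⟨n - k + j.1 + 1 + (i.1 - (n - k + j.1 + 1)), by omega⟩ :=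
        Fin.ext (by simp only [Fin.val_mk]; omega)
      rw [hieq]
      exact h2
  · intro x j hx
    have hmain : ∀ (j' : Fin k),
        ∑ s : Fin k → Bool, Stmt12.sgnS s j' • g (actA s ⟨negAt j x.1, hx⟩) j' =
        ∑ s : Fin k → Bool,
          Stmt12.sgnS (fun i => xor (s i) (decide (i = j))) j' • g (actA s x) j' := by
      intro j'
      have hinv : Function.Involutive
          (fun s : Fin k → Bool => fun i => xor (s i) (decide (i = j))) := by
        intro s; funext i; simp [Bool.xor_assoc]
      refine Fintype.sum_bijective _ hinv.bijective _ _ (fun s => ?_)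
      have hpt : actA s ⟨negAt j x.1, hx⟩ =
          actA (fun i => xor (s i) (decide (i = j))) x := by
        apply Subtype.ext
        show Stmt12.actS s (negAt j x.1) = _
        rw [Stmt12.negAt_eq_actS, Stmt12.actS_actS]
      rw [hpt]
      congr 1
      simp [Stmt12.sgnS, Bool.xor_assoc]
    refine ⟨⟨?_, ?_⟩, ?_⟩
    · show (∑ s : Fin k → Bool, Stmt12.sgnS s j • g (actA s ⟨negAt j x.1, hx⟩) j) =
        -(∑ s : Fin k → Bool, Stmt12.sgnS s j • g (actA s x) j)
      rw [hmain j, ← Finset.sum_neg_distrib]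
      refine Finset.sum_congr rfl (fun t _ => ?_)
      have hsg : Stmt12.sgnS (fun i => xor (t i) (decide (i = j))) j = -Stmt12.sgnS t j := by
        by_cases h : t j <;> simp [Stmt12.sgnS, h]
      rw [hsg, neg_smul]
    · intro i hij
      show (∑ s : Fin k → Bool, Stmt12.sgnS s i • g (actA s ⟨negAt j x.1, hx⟩) i) =
        (∑ s : Fin k → Bool, Stmt12.sgnS s i • g (actA s x) i)
      rw [hmain i]
      refine Finset.sum_congr rfl (fun t _ => ?_)
      congr 1
      simp [Stmt12.sgnS, hij]
    · intro p
      show (negAt j x.1) p.1.1 ⟨n - k + p.1.1.1 + 1 + p.1.2.1, by have := p.2; omega⟩ = _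
      unfold negAt
      rw [Function.update_apply]
      have hneg : ∀ (v : EuclideanSpace ℝ (Fin n)) (i : Fin n), (-v) i = -(v i) :=
        fun v i => rfl
      by_cases h : p.1.1 = j
      · rw [if_pos h, if_pos h.symm, hneg]
        exact congrArg Neg.neg (congrArg (fun v : EuclideanSpace ℝ (Fin n) => v _) (congrArg x.1 h)).symm
      · rw [if_neg h, if_neg (Ne.symm h)]
end

section
/- Let 1 ≤ k ≤ n and m ≥ 0 be integers, let α_1, …, α_m ∈ (ℤ/2)^k be sign patterns, and let M be the space of all k-tuples (x_1, …, x_k) of pairwise orthogonal unit vectors in ℝ^n such that, for each j ∈ {1, …, k}, the last k - j coordinates of x_j are zero. Let f : M → ℝ^m be a continuous map such that for every j ∈ {1, …, k} and i ∈ {1, …, m}, replacing x_j by -x_j multiplies the i-th coordinate f_i(x_1, …, x_k) by (-1)^{⟨α_i, ε_j⟩}. Then there exists a continuous map F : V_{n,k} → ℝ^m with the same equivariance property whose restriction to M equals f. -/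
noncomputable section StmtAux13

/-- sign character of `ZMod 2`. -/
def zchi (a : ZMod 2) : ℝ := (-1 : ℝ) ^ a.val

lemma zchi_add (a b : ZMod 2) : zchi (a + b) = zchi a * zchi b := by
  unfold zchi; rw [ZMod.val_add, ← neg_one_pow_eq_pow_mod_two, pow_add]

lemma zchi_sq (a : ZMod 2) : zchi a * zchi a = 1 := by
  unfold zchi; rw [← pow_add, ← two_mul, pow_mul]; norm_num

lemma abs_zchi (a : ZMod 2) : |zchi a| = 1 := by
  fin_cases a <;> norm_num [zchi]

lemma zchi_zero : zchi 0 = 1 := by norm_num [zchi]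

lemma zmod2_add_self (a : ZMod 2) : a + a = 0 := by fin_cases a <;> rfl

/-- action of `(ZMod 2)^k` on tuples. -/
def zact {n k : ℕ} (g : Fin k → ZMod 2) (x : Fin k → EuclideanSpace ℝ (Fin n)) :
    Fin k → EuclideanSpace ℝ (Fin n) := fun j => zchi (g j) • x j

/-- elementary bit vector. -/
def zel {k : ℕ} (j : Fin k) : Fin k → ZMod 2 := fun i => if i = j then 1 else 0

lemma zact_add {n k : ℕ} (g h : Fin k → ZMod 2) (x : Fin k → EuclideanSpace ℝ (Fin n)) :
    zact (g + h) x = zact g (zact h x) := by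
  funext j
  simp [zact, zchi_add, smul_smul]

lemma zact_zel {n k : ℕ} (j : Fin k) (x : Fin k → EuclideanSpace ℝ (Fin n)) :
    zact (zel j) x = negAt j x := by
  funext j'
  by_cases h : j' = j
  · subst h
    simp [zact, zel, negAt, zchi, show ZMod.val (1:ZMod 2) = 1 from rfl]
  · simp [zact, zel, negAt, h, Function.update_of_ne h, zchi_zero]

lemma stiefel_zact {n k : ℕ} (g : Fin k → ZMod 2) {x : Fin k → EuclideanSpace ℝ (Fin n)}
    (hx : IsStiefelFrame n k x) : IsStiefelFrame n k (zact g x) := by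
  refine ⟨fun j => ?_, fun i j hij => ?_⟩
  · rw [zact, norm_smul, Real.norm_eq_abs, abs_zchi, one_mul, hx.1 j]
  · show inner ℝ (zchi (g i) • x i) (zchi (g j) • x j) = (0:ℝ)
    rw [real_inner_smul_left, real_inner_smul_right, hx.2 i j hij, mul_zero, mul_zero]

lemma flag_zact {n k : ℕ} (g : Fin k → ZMod 2) {x : Fin k → EuclideanSpace ℝ (Fin n)}
    (hx : IsFlagFrame n k x) : IsFlagFrame n k (zact g x) := by
  refine ⟨stiefel_zact g hx.1, fun j i hi => ?_⟩
  show zchi (g j) • x j i = 0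
  rw [hx.2 j i hi, smul_zero]

/-- pairing character. -/
def zchar {k : ℕ} (a g : Fin k → ZMod 2) : ℝ := zchi (∑ j, a j * g j)

lemma zchar_add {k : ℕ} (a g h : Fin k → ZMod 2) :
    zchar a (g + h) = zchar a g * zchar a h := by
  simp [zchar, mul_add, Finset.sum_add_distrib, zchi_add]

lemma zchar_zel {k : ℕ} (a : Fin k → ZMod 2) (j : Fin k) :
    zchar a (zel j) = zchi (a j) := by
  simp [zchar, zel, mul_ite, Finset.sum_ite_eq']

lemma zchar_sq {k : ℕ} (a g : Fin k → ZMod 2) : zchar a g * zchar a g = 1 :=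
  zchi_sq _

lemma zchar_zero {k : ℕ} (a : Fin k → ZMod 2) : zchar a 0 = 1 := by
  simp [zchar, zchi_zero]

end StmtAux13

lemma zmod2_eq_one {a : ZMod 2} (h : a ≠ 0) : a = 1 := by
  fin_cases a
  · exact absurd rfl h
  · rfl

lemma zmod2_val_zero {a : ZMod 2} (h : a.val = 0) : a = 0 := by
  fin_cases a
  · rfl
  · exact absurd h (by decide)

/-- Every continuous map `f : M → ℝ^m` that is `(ℤ/2)^k`-equivariant with
respect to sign patterns `α_1, …, α_m` extends to a continuous equivariant map
`F : V_{n,k} → ℝ^m`. -/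
theorem stmt_13 (n k m : ℕ) (hk : 1 ≤ k) (hkn : k ≤ n)
    (α : Fin m → Fin k → ZMod 2)
    (f : {x : Fin k → EuclideanSpace ℝ (Fin n) // IsFlagFrame n k x} →
      EuclideanSpace ℝ (Fin m))
    (hf : Continuous f)
    (hequiv : ∀ (x : {x : Fin k → EuclideanSpace ℝ (Fin n) // IsFlagFrame n k x})
      (j : Fin k) (hx : IsFlagFrame n k (negAt j x.1)) (i : Fin m),
      f ⟨negAt j x.1, hx⟩ i = (-1 : ℝ) ^ (α i j).val * f x i) :
    ∃ F : {x : Fin k → EuclideanSpace ℝ (Fin n) // IsStiefelFrame n k x} →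
        EuclideanSpace ℝ (Fin m),
      Continuous F ∧
      (∀ (x : {x : Fin k → EuclideanSpace ℝ (Fin n) // IsStiefelFrame n k x})
        (j : Fin k) (hx : IsStiefelFrame n k (negAt j x.1)) (i : Fin m),
        F ⟨negAt j x.1, hx⟩ i = (-1 : ℝ) ^ (α i j).val * F x i) ∧
      ∀ (x : Fin k → EuclideanSpace ℝ (Fin n)) (hV : IsStiefelFrame n k x)
        (hM : IsFlagFrame n k x), F ⟨x, hV⟩ = f ⟨x, hM⟩ := by
  classical
  set V := {x : Fin k → EuclideanSpace ℝ (Fin n) // IsStiefelFrame n k x} with hV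
  let S : Set V := {x | IsFlagFrame n k x.1}
  -- `S` is closed
  have hScl : IsClosed S := by
    have hrepr : S = ⋂ (j : Fin k) (i : Fin n),
        {x : V | n - k + j.1 + 1 ≤ i.1 → x.1 j i = 0} := by
      ext x
      simp only [Set.mem_iInter, Set.mem_setOf_eq, S, IsFlagFrame]
      exact ⟨fun h j i hi => h.2 j i hi, fun h => ⟨x.2, h⟩⟩
    rw [hrepr]
    refine isClosed_iInter fun j => isClosed_iInter fun i => ?_
    by_cases h : n - k + j.1 + 1 ≤ i.1
    · have hset : {x : V | n - k + j.1 + 1 ≤ i.1 → x.1 j i = 0}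
          = {x : V | x.1 j i = 0} := by ext x; simp [h]
      rw [hset]
      have hc : Continuous fun x : V => x.1 j i :=
        (EuclideanSpace.proj i).continuous.comp
          ((continuous_apply j).comp continuous_subtype_val)
      exact isClosed_eq hc continuous_const
    · have hset : {x : V | n - k + j.1 + 1 ≤ i.1 → x.1 j i = 0} = Set.univ := by
        ext x; simp [h]
      rw [hset]; exact isClosed_univ
  -- Tietze extension coordinatewise
  have hext : ∀ i : Fin m, ∃ G : C(V, ℝ),
      ∀ x : S, G x.1 = f ⟨x.1.1, x.2⟩ i := by
    intro i
    have hcont : Continuous fun x : S => f ⟨x.1.1, x.2⟩ i := by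
      apply (EuclideanSpace.proj i).continuous.comp
      exact hf.comp (Continuous.subtype_mk
        (continuous_subtype_val.comp continuous_subtype_val) _)
    obtain ⟨G, hGr⟩ := ContinuousMap.exists_restrict_eq (Y := ℝ) hScl ⟨_, hcont⟩
    exact ⟨G, fun x => ContinuousMap.congr_fun hGr x⟩
  choose G hG using hext
  -- the action on V
  let Φ : (Fin k → ZMod 2) → V → V := fun g x => ⟨zact g x.1, stiefel_zact g x.2⟩
  have hΦc : ∀ g, Continuous (Φ g) := fun g =>
    Continuous.subtype_mk (f := fun x : V => zact g x.1) (continuous_pi fun j =>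
      Continuous.const_smul (g := fun x : V => x.1 j)
        ((continuous_apply j).comp continuous_subtype_val) (zchi (g j))) _
  -- the averaged extension
  let F : V → EuclideanSpace ℝ (Fin m) := fun x => WithLp.toLp 2 fun i =>
    (2 ^ k : ℝ)⁻¹ * ∑ g : Fin k → ZMod 2, zchar (α i) g * G i (Φ g x)
  -- equivariance of `f` under the full group on `M`
  have key : ∀ (N : ℕ) (g : Fin k → ZMod 2), (∑ j, (g j).val) ≤ N →
      ∀ (x : {x : Fin k → EuclideanSpace ℝ (Fin n) // IsFlagFrame n k x})
        (hx : IsFlagFrame n k (zact g x.1)) (i : Fin m),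
      f ⟨zact g x.1, hx⟩ i = zchar (α i) g * f x i := by
    intro N
    induction N with
    | zero =>
      intro g hg x hx i
      have hg0 : g = 0 := by
        funext j
        refine zmod2_val_zero ?_
        have := Finset.sum_eq_zero_iff.mp (Nat.le_zero.mp hg) j (Finset.mem_univ j)
        exact this
      subst hg0
      have hxx : zact (0 : Fin k → ZMod 2) x.1 = x.1 := by
        funext j; show zchi 0 • x.1 j = x.1 j; rw [zchi_zero, one_smul]
      rw [zchar_zero, one_mul]
      exact congrArg (fun y => f y i) (Subtype.ext hxx : (⟨zact 0 x.1, hx⟩ : {x : Fin k → EuclideanSpace ℝ (Fin n) // IsFlagFrame n k x}) = x)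
    | succ N ih =>
      intro g hg x hx i
      by_cases hg0 : g = 0
      · subst hg0
        have hxx : zact (0 : Fin k → ZMod 2) x.1 = x.1 := by
          funext j; show zchi 0 • x.1 j = x.1 j; rw [zchi_zero, one_smul]
        rw [zchar_zero, one_mul]
        exact congrArg (fun y => f y i) (Subtype.ext hxx : (⟨zact 0 x.1, hx⟩ : {x : Fin k → EuclideanSpace ℝ (Fin n) // IsFlagFrame n k x}) = x)
      · obtain ⟨j, hj⟩ : ∃ j, g j ≠ 0 := by
          by_contra h; push_neg at h; exact hg0 (funext h)
        have hj1 : g j = 1 := zmod2_eq_one hj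
        set g' := Function.update g j 0 with hg'def
        have hdec : g = zel j + g' := by
          funext j'
          by_cases h : j' = j
          · subst h; simp [zel, g', Function.update_self, hj1]
          · simp [zel, h, g', Function.update_of_ne h]
        have hsum : (∑ j', (g' j').val) ≤ N := by
          have h1 : (∑ j', (g j').val)
              = (g j).val + ∑ j' ∈ Finset.univ.erase j, (g j').val :=
            (Finset.add_sum_erase _ _ (Finset.mem_univ j)).symm
          have h2 : (∑ j', (g' j').val)
              = (g' j).val + ∑ j' ∈ Finset.univ.erase j, (g' j').val :=
            (Finset.add_sum_erase _ _ (Finset.mem_univ j)).symm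
          have h3 : ∑ j' ∈ Finset.univ.erase j, (g' j').val
              = ∑ j' ∈ Finset.univ.erase j, (g j').val := by
            refine Finset.sum_congr rfl fun j' hj' => ?_
            rw [hg'def, Function.update_of_ne (Finset.ne_of_mem_erase hj')]
          have h4 : (g' j).val = 0 := by rw [hg'def, Function.update_self]; rfl
          have h5 : (g j).val = 1 := by rw [hj1]; rfl
          omega
        have hx' : IsFlagFrame n k (zact g' x.1) := flag_zact g' x.2
        have heq : zact g x.1 = negAt j (zact g' x.1) := by
          rw [hdec, zact_add, zact_zel]
        have hnx : IsFlagFrame n k (negAt j (zact g' x.1)) := heq ▸ hx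
        have step1 : f ⟨zact g x.1, hx⟩ i = f ⟨negAt j (zact g' x.1), hnx⟩ i := by
          exact congrArg (fun y => f y i) (Subtype.ext heq : (⟨zact g x.1, hx⟩ : {x : Fin k → EuclideanSpace ℝ (Fin n) // IsFlagFrame n k x}) = ⟨negAt j (zact g' x.1), hnx⟩)
        rw [step1, hequiv ⟨zact g' x.1, hx'⟩ j hnx i, ih g' hsum x hx' i, hdec,
          zchar_add, zchar_zel]
        ring_nf
        rfl
  -- coordinates of F
  have hFcoord : ∀ (x : V) (i : Fin m),
      F x i = (2 ^ k : ℝ)⁻¹ * ∑ g : Fin k → ZMod 2, zchar (α i) g * G i (Φ g x) :=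
    fun x i => rfl
  refine ⟨F, ?_, ?_, ?_⟩
  · -- continuity
    have : Continuous fun x : V => (F x : Fin m → ℝ) := by
      refine continuous_pi fun i => ?_
      refine Continuous.mul continuous_const ?_
      refine continuous_finset_sum _ fun g _ => ?_
      exact Continuous.mul continuous_const ((G i).continuous.comp (hΦc g))
    exact (PiLp.continuous_toLp (p := 2) (β := fun _ : Fin m => ℝ)).comp this
  · -- equivariance
    intro x j hx i
    rw [hFcoord, hFcoord]
    have hΦeq : ∀ g : Fin k → ZMod 2,
        Φ g ⟨negAt j x.1, hx⟩ = Φ (g + zel j) x := by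
      intro g
      refine Subtype.ext ?_
      show zact g (negAt j x.1) = zact (g + zel j) x.1
      rw [zact_add, zact_zel]
    have hre : ∑ g : Fin k → ZMod 2, zchar (α i) g * G i (Φ g ⟨negAt j x.1, hx⟩)
        = ∑ g : Fin k → ZMod 2, zchar (α i) (g + zel j) * G i (Φ g x) := by
      rw [show (fun g : Fin k → ZMod 2 => zchar (α i) g * G i (Φ g ⟨negAt j x.1, hx⟩))
          = fun g => zchar (α i) g * G i (Φ (g + zel j) x) by
        funext g; rw [hΦeq g]]
      rw [← Equiv.sum_comp (Equiv.addRight (zel j))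
        (fun g : Fin k → ZMod 2 => zchar (α i) g * G i (Φ (g + zel j) x))]
      refine Finset.sum_congr rfl fun g _ => ?_
      have : (Equiv.addRight (zel j)) g + zel j = g := by
        show g + zel j + zel j = g
        rw [add_assoc]
        simp [show zel (k := k) j + zel j = 0 from funext fun i' => zmod2_add_self _]
      rw [this]
      rfl
    rw [hre]
    have hfac : ∀ g : Fin k → ZMod 2,
        zchar (α i) (g + zel j) = (-1 : ℝ) ^ (α i j).val * zchar (α i) g := by
      intro g
      rw [zchar_add, zchar_zel, mul_comm]
      rfl
    have : ∑ g : Fin k → ZMod 2, zchar (α i) (g + zel j) * G i (Φ g x)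
        = (-1 : ℝ) ^ (α i j).val * ∑ g : Fin k → ZMod 2, zchar (α i) g * G i (Φ g x) := by
      rw [Finset.mul_sum]
      exact Finset.sum_congr rfl fun g _ => by rw [hfac g, mul_assoc]
    rw [this]
    ring
  · -- restriction
    intro x hV' hM
    ext i
    rw [hFcoord]
    have hval : ∀ g : Fin k → ZMod 2,
        zchar (α i) g * G i (Φ g ⟨x, hV'⟩) = f ⟨x, hM⟩ i := by
      intro g
      have hmem : (Φ g ⟨x, hV'⟩) ∈ S := flag_zact g hM
      have := hG i ⟨Φ g ⟨x, hV'⟩, hmem⟩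
      rw [this]
      have := key (∑ j, (g j).val) g le_rfl ⟨x, hM⟩ (flag_zact g hM) i
      show zchar (α i) g * f ⟨zact g x, _⟩ i = f ⟨x, hM⟩ i
      rw [this, ← mul_assoc, zchar_sq, one_mul]
    rw [Finset.sum_congr rfl fun g _ => hval g]
    rw [Finset.sum_const, Finset.card_univ]
    have hcard : Fintype.card (Fin k → ZMod 2) = 2 ^ k := by
      simp [ZMod.card]
    rw [hcard, nsmul_eq_mul, ← mul_assoc]
    norm_num
end
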